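/- Let (β̂₁, β̂₂) be Kyle's two-period equilibrium: b̂₁ ∈ (0,1) the unique solution of 1 = b̂₁²/((1 − b̂₁²)²(1 + b̂₁²)), b̂₂ := 1, Σ̂₀ := Σ₀, Σ̂₁ := Σ̂₀/(1 + b̂₁²), β̂₁ := b̂₁σᵤ/√(Σ̂₀Δ), β̂₂ := b̂₂σᵤ/√(Σ̂₁Δ). Then T is differentiable at (β̂₁, β̂₂) and the partial derivatives with respect to β₂ of both coordinates vanish there: ∂T₁/∂β₂(β̂₁, β̂₂) = 0 and ∂T₂/∂β₂(β̂₁, β̂₂) = 0; i.e., the second column of the Jacobian matrix of T at (β̂₁, β̂₂) is zero. -/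

import Mathlib

/-- First coordinate of the two-period policy-iteration map. -/
noncomputable def T2p1 (Δ σu Sig0 β1 β2 : ℝ) : ℝ :=
  (β1 ^ 2 * Δ * Sig0 + σu ^ 2) *
      (β1 * Δ * Sig0 * (β1 - β2) ^ 2 + σu ^ 2 * (β1 - 2 * β2)) /
    (β1 * Δ * Sig0 *
      (β1 * Δ * Sig0 * (β1 ^ 2 - 4 * β1 * β2 + β2 ^ 2) + σu ^ 2 * (β1 - 4 * β2)))

/-- Second coordinate of the two-period policy-iteration map. -/
noncomputable def T2p2 (Δ σu Sig0 β1 β2 : ℝ) : ℝ :=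
  (Δ * Sig0 * (β1 ^ 2 + β2 ^ 2) + σu ^ 2) / (2 * β2 * Δ * Sig0)

/-- At Kyle's two-period equilibrium `(β̂₁, β̂₂)`, the map `T` is differentiable and
the partial derivatives with respect to `β₂` of both coordinates vanish:
the second column of the Jacobian matrix of `T` at `(β̂₁, β̂₂)` is zero. -/
theorem two_period_jacobian_second_column_zero (Δ σu Sig0 : ℝ) (hΔ : 0 < Δ)
    (hσ : 0 < σu) (hSig : 0 < Sig0) (b1 : ℝ) (hb1 : b1 ∈ Set.Ioo (0 : ℝ) 1)
    (hb1eq : 1 = b1 ^ 2 / ((1 - b1 ^ 2) ^ 2 * (1 + b1 ^ 2))) :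
    let β1 : ℝ := b1 * σu / Real.sqrt (Sig0 * Δ)
    let β2 : ℝ := 1 * σu / Real.sqrt (Sig0 / (1 + b1 ^ 2) * Δ)
    DifferentiableAt ℝ
      (fun p : ℝ × ℝ => (T2p1 Δ σu Sig0 p.1 p.2, T2p2 Δ σu Sig0 p.1 p.2)) (β1, β2) ∧
    HasDerivAt (fun y => T2p1 Δ σu Sig0 β1 y) 0 β2 ∧
    HasDerivAt (fun y => T2p2 Δ σu Sig0 β1 y) 0 β2 := by
  intro β1 β2
  have hA : (0:ℝ) < 1 + b1^2 := by positivity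
  have hAne : (1 + b1^2 : ℝ) ≠ 0 := ne_of_gt hA
  have hsp : (0:ℝ) < Sig0 * Δ := by positivity
  have hpos2 : (0:ℝ) < Sig0/(1+b1^2)*Δ := by positivity
  have hss0 : Real.sqrt (Sig0 / (1 + b1 ^ 2) * Δ) * Real.sqrt (1+b1^2) = Real.sqrt (Sig0*Δ) := by
    rw [← Real.sqrt_mul hpos2.le]
    congr 1
    field_simp
  set s : ℝ := Real.sqrt (Sig0*Δ) with hsdef
  set t : ℝ := Real.sqrt (Sig0/(1+b1^2)*Δ) with htdef
  set c : ℝ := Real.sqrt (1+b1^2) with hcdef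
  have hs2 : s^2 = Sig0*Δ := Real.sq_sqrt hsp.le
  have ht2 : t^2 = Sig0/(1+b1^2)*Δ := Real.sq_sqrt hpos2.le
  have hc2 : c^2 = 1+b1^2 := Real.sq_sqrt hA.le
  have hs0 : 0 < s := Real.sqrt_pos.mpr hsp
  have ht0 : 0 < t := Real.sqrt_pos.mpr hpos2
  have hc0 : 0 < c := Real.sqrt_pos.mpr hA
  have hsne : s ≠ 0 := ne_of_gt hs0
  have htne : t ≠ 0 := ne_of_gt ht0
  have hcne : c ≠ 0 := ne_of_gt hc0
  have e1 : Δ * Sig0 * β1^2 = b1^2*σu^2 := by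
    show Δ * Sig0 * (b1 * σu / s)^2 = b1^2*σu^2
    field_simp
    linear_combination -b1^2*hs2
  have ht2' : (1+b1^2)*t^2 = Sig0*Δ := by
    rw [ht2]; field_simp
  have e2 : Δ * Sig0 * β2^2 = (1+b1^2)*σu^2 := by
    show Δ * Sig0 * (1 * σu / t)^2 = (1+b1^2)*σu^2
    field_simp
    linear_combination -ht2'
  have e3 : Δ * Sig0 * (β1*β2) = b1 * c * σu^2 := by
    show Δ * Sig0 * ((b1 * σu / s) * (1 * σu / t)) = b1 * c * σu^2
    field_simp
    linear_combination -b1*s*hss0 - b1*hs2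
  have hβ1pos : 0 < β1 := by
    show 0 < b1 * σu / s
    exact div_pos (mul_pos hb1.1 hσ) hs0
  have hβ2pos : 0 < β2 := by
    show 0 < 1 * σu / t
    exact div_pos (by simpa using hσ) ht0
  have hclt : 1 < c := by nlinarith [hc2, hc0, mul_pos hb1.1 hb1.1]
  have hblt : b1 - 2*c < 0 := by nlinarith [hb1.2]
  -- value of the denominator of T2p1 at (β1, β2)
  have hDval : β1*Δ*Sig0*(β1*Δ*Sig0*(β1^2-4*β1*β2+β2^2)+σu^2*(β1-4*β2))
      = 2*b1*σu^4*(1+b1^2)*(b1-2*c) := by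
    linear_combination (σu^2 + σu^2*b1^2 + β2^2*(Δ*Sig0) - 4*β1*β2*(Δ*Sig0) + β1^2*(Δ*Sig0))*e1
      + (σu^2*b1^2)*e2 + (-4*σu^2 - 4*σu^2*b1^2)*e3
  have hD0 : β1*Δ*Sig0*(β1*Δ*Sig0*(β1^2-4*β1*β2+β2^2)+σu^2*(β1-4*β2)) ≠ 0 := by
    rw [hDval]
    have hp : (0:ℝ) < 2*b1*σu^4*(1+b1^2) :=
      mul_pos (mul_pos (mul_pos two_pos hb1.1) (pow_pos hσ 4)) hA
    exact ne_of_lt (mul_neg_of_pos_of_neg hp hblt)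
  have hden2 : (2*β2*Δ*Sig0 : ℝ) ≠ 0 :=
    mul_ne_zero (mul_ne_zero (mul_ne_zero two_ne_zero (ne_of_gt hβ2pos)) (ne_of_gt hΔ))
      (ne_of_gt hSig)
  -- derivative of numerator of T2p1 in y
  have pid : HasDerivAt (fun y : ℝ => y) 1 β2 := hasDerivAt_id β2
  have hN : HasDerivAt
      (fun y => (β1 ^ 2 * Δ * Sig0 + σu ^ 2) *
        (β1 * Δ * Sig0 * (β1 - y) ^ 2 + σu ^ 2 * (β1 - 2 * y)))
      (-2*(β1^2*Δ*Sig0+σu^2)*(β1*Δ*Sig0*(β1-β2)+σu^2)) β2 := by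
    have p1 : HasDerivAt (fun y : ℝ => β1 - y) (-1) β2 := pid.const_sub β1
    have p3 := (p1.pow 2).const_mul (β1*Δ*Sig0)
    have p4 : HasDerivAt (fun y : ℝ => β1 - 2*y) (-(2*1)) β2 := (pid.const_mul 2).const_sub β1
    have p5 := p4.const_mul (σu^2)
    have p6 := (p3.add p5).const_mul (β1^2*Δ*Sig0 + σu^2)
    refine p6.congr_deriv ?_
    ring
  -- derivative of denominator of T2p1 in y
  have hD : HasDerivAt
      (fun y => β1 * Δ * Sig0 *
        (β1 * Δ * Sig0 * (β1 ^ 2 - 4 * β1 * y + y ^ 2) + σu ^ 2 * (β1 - 4 * y)))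
      (β1*Δ*Sig0*(β1*Δ*Sig0*(2*β2-4*β1) - 4*σu^2)) β2 := by
    have q1 : HasDerivAt (fun y : ℝ => β1^2 - 4*β1*y) (-(4*β1*1)) β2 :=
      (pid.const_mul (4*β1)).const_sub (β1^2)
    have q2 := q1.add (hasDerivAt_pow 2 β2)
    have q3 := q2.const_mul (β1*Δ*Sig0)
    have q4 : HasDerivAt (fun y : ℝ => β1 - 4*y) (-(4*1)) β2 := (pid.const_mul 4).const_sub β1
    have q5 := q4.const_mul (σu^2)
    have q6 := (q3.add q5).const_mul (β1*Δ*Sig0)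
    refine q6.congr_deriv ?_
    push_cast
    ring
  refine ⟨?_, ?_, ?_⟩
  · -- differentiability of the pair map
    apply DifferentiableAt.prodMk
    · simp only [T2p1, div_eq_mul_inv]
      have hnum : DifferentiableAt ℝ (fun p : ℝ × ℝ =>
          (p.1 ^ 2 * Δ * Sig0 + σu ^ 2) *
            (p.1 * Δ * Sig0 * (p.1 - p.2) ^ 2 + σu ^ 2 * (p.1 - 2 * p.2))) (β1, β2) := by
        fun_prop
      have hden : DifferentiableAt ℝ (fun p : ℝ × ℝ =>
          p.1 * Δ * Sig0 *
            (p.1 * Δ * Sig0 * (p.1 ^ 2 - 4 * p.1 * p.2 + p.2 ^ 2) + σu ^ 2 * (p.1 - 4 * p.2)))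
          (β1, β2) := by
        fun_prop
      refine hnum.mul (hden.inv ?_)
      exact hD0
    · simp only [T2p2, div_eq_mul_inv]
      have hnum : DifferentiableAt ℝ (fun p : ℝ × ℝ =>
          Δ * Sig0 * (p.1 ^ 2 + p.2 ^ 2) + σu ^ 2) (β1, β2) := by fun_prop
      have hden : DifferentiableAt ℝ (fun p : ℝ × ℝ =>
          2 * p.2 * Δ * Sig0) (β1, β2) := by fun_prop
      refine hnum.mul (hden.inv ?_)
      exact hden2
  · -- ∂T1/∂β2 = 0
    have hQ := hN.div hD hD0
    show HasDerivAt (fun y => (β1 ^ 2 * Δ * Sig0 + σu ^ 2) *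
        (β1 * Δ * Sig0 * (β1 - y) ^ 2 + σu ^ 2 * (β1 - 2 * y)) /
      (β1 * Δ * Sig0 *
        (β1 * Δ * Sig0 * (β1 ^ 2 - 4 * β1 * y + y ^ 2) + σu ^ 2 * (β1 - 4 * y)))) 0 β2
    refine hQ.congr_deriv ?_
    rw [div_eq_zero_iff]
    left
    linear_combination
      (2*σu^6 + 6*σu^6*b1^2 + 6*σu^6*b1^4 + 2*σu^6*b1^6
        - 2*β2^2*(Δ*Sig0)*σu^4 - 4*β2^2*(Δ*Sig0)*σu^4*b1^2 - 2*β2^2*(Δ*Sig0)*σu^4*b1^4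
        + 6*β1^2*(Δ*Sig0)*σu^4 + 6*β1^2*(Δ*Sig0)*σu^4*b1^2 + 2*β1^2*(Δ*Sig0)*σu^4*b1^4
        - 4*β1^2*β2^2*(Δ*Sig0)^2*σu^2 - 2*β1^2*β2^2*(Δ*Sig0)^2*σu^2*b1^2
        + 6*β1^4*(Δ*Sig0)^2*σu^2 + 2*β1^4*(Δ*Sig0)^2*σu^2*b1^2
        - 2*β1^4*β2^2*(Δ*Sig0)^3 + 2*β1^6*(Δ*Sig0)^3)*e1
      + (-2*σu^6*b1^2 - 4*σu^6*b1^4 - 2*σu^6*b1^6)*e2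
  · -- ∂T2/∂β2 = 0
    have hnum : HasDerivAt (fun y : ℝ => Δ * Sig0 * (β1 ^ 2 + y ^ 2) + σu ^ 2)
        (Δ*Sig0*(2*β2)) β2 := by
      have r1 := ((hasDerivAt_pow 2 β2).const_add (β1^2)).const_mul (Δ*Sig0)
      have r2 := r1.add_const (σu^2)
      refine r2.congr_deriv ?_
      push_cast
      ring
    have hdenD : HasDerivAt (fun y : ℝ => 2 * y * Δ * Sig0) (2*Δ*Sig0) β2 := by
      have r3 := ((pid.const_mul 2).mul_const Δ).mul_const Sig0
      refine r3.congr_deriv ?_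
      ring
    have hQ2 := hnum.div hdenD hden2
    show HasDerivAt
      (fun y => (Δ * Sig0 * (β1 ^ 2 + y ^ 2) + σu ^ 2) / (2 * y * Δ * Sig0)) 0 β2
    refine hQ2.congr_deriv ?_
    rw [div_eq_zero_iff]
    left
    linear_combination (2*(Δ*Sig0))*e2 - (2*(Δ*Sig0))*e1
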